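/- Main theorem: Let Ω be a nonempty compact metrizable space, M^τ(Ω) a nonempty compact convex subset of Borel probability measures on Ω (weak* topology), and h^τ : M^τ(Ω) → ℝ bounded, affine, and upper semicontinuous; set P^τ(g) = sup_{μ∈M^τ(Ω)}(μ(g)+h^τ(μ)). Fix f ∈ C(Ω) and suppose there is a vector subspace V dense in C(Ω) such that for every g ∈ V the function f+g has a unique equilibrium state. Then for every μ ∈ M^τ(Ω) there exists a sequence (μ_n, g_n) in M^τ(Ω) × V such that μ_n → μ weak*, h^τ(μ_n) → h^τ(μ), and for each n, μ_n is the (unique) equilibrium state of f + g_n. -/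

import Mathlib

open Filter Topology

set_option maxHeartbeats 1600000 in
/-- Main theorem (Theorem `Kifer-implies-approx`): if there is a dense vector subspace
`V ⊆ C(Ω, ℝ)` such that `f + g` has a unique equilibrium state for every `g ∈ V`, then every
`μ ∈ M = M^τ(Ω)` is the weak* limit of a sequence `μ_n` of (unique) equilibrium states of
functions `f + g_n` with `g_n ∈ V`, with moreover `h(μ_n) → h(μ)`. -/
theorem stmt13 {Ω : Type} [TopologicalSpace Ω] [CompactSpace Ω]
    [TopologicalSpace.MetrizableSpace Ω] [Nonempty Ω]
    (M : Set (WeakDual ℝ C(Ω, ℝ))) (hne : M.Nonempty) (hcomp : IsCompact M)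
    (hconv : Convex ℝ M)
    (hprob : ∀ μ ∈ M, μ (1 : C(Ω, ℝ)) = 1 ∧ ∀ g : C(Ω, ℝ), (∀ ω, 0 ≤ g ω) → 0 ≤ μ g)
    (h : WeakDual ℝ C(Ω, ℝ) → ℝ)
    (hbdd : ∃ C : ℝ, ∀ μ ∈ M, |h μ| ≤ C)
    (haff : ∀ μ ∈ M, ∀ ν ∈ M, ∀ a b : ℝ, 0 ≤ a → 0 ≤ b → a + b = 1 →
      h (a • μ + b • ν) = a * h μ + b * h ν)
    (husc : UpperSemicontinuousOn h M)
    (P : C(Ω, ℝ) → ℝ)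
    (hP : ∀ g : C(Ω, ℝ), P g = sSup ((fun μ : WeakDual ℝ C(Ω, ℝ) => μ g + h μ) '' M))
    (f : C(Ω, ℝ))
    (V : Submodule ℝ C(Ω, ℝ)) (hV : Dense (V : Set C(Ω, ℝ)))
    (huniq : ∀ g ∈ V, ∃! μ : WeakDual ℝ C(Ω, ℝ),
      μ ∈ M ∧ μ (f + g) + h μ = P (f + g)) :
    ∀ μ ∈ M, ∃ (μn : ℕ → WeakDual ℝ C(Ω, ℝ)) (gn : ℕ → C(Ω, ℝ)),
      (∀ n, gn n ∈ V) ∧ (∀ n, μn n ∈ M) ∧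
      Tendsto μn atTop (𝓝 μ) ∧
      Tendsto (fun n => h (μn n)) atTop (𝓝 (h μ)) ∧
      ∀ n, μn n (f + gn n) + h (μn n) = P (f + gn n) := by
  classical
  obtain ⟨C₀, hC₀⟩ := hbdd
  set C : ℝ := |C₀| with hCdef
  have hC : ∀ ν ∈ M, |h ν| ≤ C := fun ν hν => le_trans (hC₀ ν hν) (le_abs_self C₀)
  -- norm bound for elements of M
  have hnorm : ∀ ν ∈ M, ∀ g : C(Ω, ℝ), |ν g| ≤ ‖g‖ := by
    intro ν hν g
    obtain ⟨h1, hpos⟩ := hprob ν hν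
    have h2 : 0 ≤ ν (‖g‖ • (1 : C(Ω,ℝ)) - g) := by
      apply hpos
      intro ω
      have hb : |g ω| ≤ ‖g‖ := by simpa using ContinuousMap.norm_coe_le_norm g ω
      simp only [ContinuousMap.sub_apply, ContinuousMap.smul_apply, ContinuousMap.one_apply,
        smul_eq_mul, mul_one]
      linarith [abs_le.mp hb]
    have h3 : 0 ≤ ν (‖g‖ • (1 : C(Ω,ℝ)) + g) := by
      apply hpos
      intro ω
      have hb : |g ω| ≤ ‖g‖ := by simpa using ContinuousMap.norm_coe_le_norm g ω
      simp only [ContinuousMap.add_apply, ContinuousMap.smul_apply, ContinuousMap.one_apply,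
        smul_eq_mul, mul_one]
      linarith [abs_le.mp hb]
    rw [map_sub, map_smul] at h2
    rw [map_add, map_smul] at h3
    rw [h1] at h2 h3
    simp only [smul_eq_mul, mul_one] at h2 h3
    rw [abs_le]; constructor <;> linarith
  -- the pressure of perturbed potentials
  set Q : C(Ω,ℝ) → ℝ := fun g => P (f + g) with hQdef
  have hQg : ∀ g, Q g = P (f + g) := fun _ => rfl
  have hQsup : ∀ g : C(Ω,ℝ), Q g = sSup ((fun ν : WeakDual ℝ C(Ω,ℝ) => ν (f+g) + h ν) '' M) :=
    fun g => by rw [hQg, hP]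
  have himne : ∀ g : C(Ω,ℝ), ((fun ν : WeakDual ℝ C(Ω,ℝ) => ν (f+g) + h ν) '' M).Nonempty :=
    fun g => hne.image _
  have hbddA : ∀ g : C(Ω,ℝ), BddAbove ((fun ν : WeakDual ℝ C(Ω,ℝ) => ν (f+g) + h ν) '' M) := by
    intro g
    refine ⟨‖f+g‖ + C, ?_⟩
    rintro x ⟨ν, hν, rfl⟩
    have h1 := hnorm ν hν (f+g)
    have h2 := hC ν hν
    have := abs_le.mp h1
    have := abs_le.mp h2
    simp only []
    linarith [(abs_le.mp h1).2, (abs_le.mp h2).2]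
  have hQle : ∀ (g : C(Ω,ℝ)), ∀ ν ∈ M, ν (f+g) + h ν ≤ Q g := by
    intro g ν hν
    rw [hQsup]
    exact le_csSup (hbddA g) ⟨ν, hν, rfl⟩
  have hQlt : ∀ (g : C(Ω,ℝ)), ∀ ε > (0:ℝ), ∃ ν ∈ M, Q g - ε < ν (f+g) + h ν := by
    intro g ε hε
    have hlt : Q g - ε < sSup ((fun ν : WeakDual ℝ C(Ω,ℝ) => ν (f+g) + h ν) '' M) := by
      rw [← hQsup]; linarith
    obtain ⟨x, ⟨ν, hν, rfl⟩, hx⟩ := exists_lt_of_lt_csSup (himne g) hlt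
    exact ⟨ν, hν, hx⟩
  have hQlip : ∀ g g' : C(Ω,ℝ), Q g ≤ Q g' + ‖g - g'‖ := by
    intro g g'
    rw [hQsup g]
    apply csSup_le (himne g)
    rintro x ⟨ν, hν, rfl⟩
    have hsplit : f + g = (f + g') + (g - g') := by abel
    have h1 : ν (f + g) = ν (f + g') + ν (g - g') := by rw [hsplit, map_add]
    have h2 : ν (g - g') ≤ ‖g - g'‖ := le_trans (le_abs_self _) (hnorm ν hν _)
    have h3 := hQle g' ν hν
    simp only []
    linarith
  -- upper semicontinuity helpers
  have husc2 : ∀ g : C(Ω,ℝ), UpperSemicontinuousOn (fun ν : WeakDual ℝ C(Ω,ℝ) => ν (f+g) + h ν) M :=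
    fun g => ((WeakDual.eval_continuous (f+g)).continuousOn.upperSemicontinuousOn).add husc
  have huscF : ∀ (g' : C(Ω,ℝ)) (r : ℝ),
      UpperSemicontinuousOn (fun ν : WeakDual ℝ C(Ω,ℝ) => ν g' + (ν f + h ν) + r) M :=
    fun g' r =>
      (((WeakDual.eval_continuous g').continuousOn.upperSemicontinuousOn).add
        (((WeakDual.eval_continuous f).continuousOn.upperSemicontinuousOn).add husc)).add
        continuousOn_const.upperSemicontinuousOn
  -- closed superlevel sets
  have hclosed : ∀ (g : C(Ω,ℝ)) (a : ℝ), IsClosed {ν | ν ∈ M ∧ a ≤ ν (f+g) + h ν} := by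
    intro g a
    apply isClosed_of_closure_subset
    intro x hx
    have hxM : x ∈ M := by
      have hsub : closure {ν | ν ∈ M ∧ a ≤ ν (f+g) + h ν} ⊆ closure M :=
        closure_mono (fun y hy => hy.1)
      exact hcomp.isClosed.closure_eq ▸ hsub hx
    refine ⟨hxM, ?_⟩
    by_contra hlt
    push_neg at hlt
    set y := (x (f+g) + h x + a)/2 with hy
    have h1 : x (f+g) + h x < y := by rw [hy]; linarith
    have h2 : y < a := by rw [hy]; linarith
    have hev := husc2 g x hxM y h1
    obtain ⟨U, hUopen, hxU, hUsub⟩ := mem_nhdsWithin.mp hev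
    obtain ⟨ν, hνU, hνS⟩ := mem_closure_iff.mp hx U hUopen hxU
    have := hUsub ⟨hνU, hνS.1⟩
    simp only [Set.mem_setOf_eq] at this
    linarith [hνS.2]
  -- cluster point helpers
  have helper1 : ∀ (u : ℕ → WeakDual ℝ C(Ω,ℝ)), (∀ n, u n ∈ M) → ∃ x ∈ M, MapClusterPt x atTop u := by
    intro u hm
    have hle : Filter.map u atTop ≤ Filter.principal M := by
      rw [Filter.le_principal_iff, Filter.mem_map]
      exact Filter.Eventually.of_forall hm
    exact hcomp.exists_clusterPt hle
  have helper2 : ∀ (F : WeakDual ℝ C(Ω,ℝ) → ℝ), UpperSemicontinuousOn F M →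
      ∀ x ∈ M, ∀ (u : ℕ → WeakDual ℝ C(Ω,ℝ)), (∀ n, u n ∈ M) → MapClusterPt x atTop u →
      ∀ a : ℝ, (∀ ε > 0, ∀ᶠ n in atTop, a - ε ≤ F (u n)) → a ≤ F x := by
    intro F hF x hxM u hm hcl a hlb
    by_contra hlt
    push_neg at hlt
    set ε := (a - F x)/2 with hε
    have hεpos : 0 < ε := by rw [hε]; linarith
    have hev := hF x hxM (F x + ε) (by linarith)
    obtain ⟨U, hUopen, hxU, hUsub⟩ := mem_nhdsWithin.mp hev
    have hfreq : ∃ᶠ n in atTop, u n ∈ U := mapClusterPt_iff_frequently.mp hcl U (hUopen.mem_nhds hxU)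
    obtain ⟨n, hnU, hnlb⟩ := (hfreq.and_eventually (hlb (ε/2) (by linarith))).exists
    have hFn : F (u n) < F x + ε := hUsub ⟨hnU, hm n⟩
    have : F x + ε = a - ε := by rw [hε]; ring
    linarith
  have helper3 : ∀ (G : WeakDual ℝ C(Ω,ℝ) → ℝ), Continuous G →
      ∀ (x : WeakDual ℝ C(Ω,ℝ)) (u : ℕ → WeakDual ℝ C(Ω,ℝ)), MapClusterPt x atTop u →
      ∀ b : ℝ, (∀ n, b ≤ G (u n)) → b ≤ G x := by
    intro G hG x u hcl b hlb
    by_contra hlt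
    push_neg at hlt
    have hU : G ⁻¹' (Set.Iio b) ∈ nhds x := (hG.continuousAt).preimage_mem_nhds (Iio_mem_nhds hlt)
    obtain ⟨n, hn⟩ := (mapClusterPt_iff_frequently.mp hcl _ hU).exists
    exact absurd (hlb n) (not_le.mpr hn)
  -- `huniq` restated via Q
  have huniqQ : ∀ g ∈ V, ∃! ν : WeakDual ℝ C(Ω, ℝ), ν ∈ M ∧ ν (f + g) + h ν = Q g := by
    intro g hg
    rw [hQg g]
    exact huniq g hg
  -- Fenchel duality: every measure in M is an approximate subgradient of the pressure
  have key1 : ∀ μ ∈ M, ∀ δ > (0:ℝ), ∃ g : C(Ω,ℝ), Q g - μ g < (μ f + h μ) + δ := by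
    classical
    intro μ hμ δ hδ
    by_contra hcon
    push_neg at hcon
    -- hcon : ∀ g, μ f + h μ + δ ≤ Q g - μ g
    set c : WeakDual ℝ C(Ω,ℝ) → ℝ := fun ν => ν f + h ν with hc
    have hcapp : ∀ ν : WeakDual ℝ C(Ω,ℝ), c ν = ν f + h ν := fun _ => rfl
    set T : C(Ω,ℝ) → Set (WeakDual ℝ C(Ω,ℝ)) :=
      fun g => {ν | ν ∈ M ∧ c μ + δ + μ g ≤ ν (f + g) + h ν} with hT
    have hTclosed : ∀ g, IsClosed (T g) := fun g => hclosed g _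
    have hfin : ∀ u : Finset C(Ω,ℝ), (M ∩ ⋂ g ∈ u, T g).Nonempty := by
      intro u
      by_contra hempty
      rw [Set.not_nonempty_iff_eq_empty] at hempty
      set ι := {x // x ∈ u}
      set Φ : WeakDual ℝ C(Ω,ℝ) → EuclideanSpace ℝ ι :=
        fun ν => (WithLp.equiv 2 (ι → ℝ)).symm (fun g => ν g.1 - μ g.1 + c ν) with hΦ
      have hΦapp : ∀ ν (g : ι), Φ ν g = ν g.1 - μ g.1 + c ν := fun ν g => rfl
      set W : Set (EuclideanSpace ℝ ι) := {z | ∃ ν ∈ M, ∀ g : ι, z g ≤ Φ ν g} with hW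
      set zs : EuclideanSpace ℝ ι := (WithLp.equiv 2 (ι → ℝ)).symm (fun _ => c μ + δ) with hzs
      have hzsapp : ∀ g : ι, zs g = c μ + δ := fun g => rfl
      -- inner ℝ product formula
      have hinner : ∀ x y : EuclideanSpace ℝ ι, (inner ℝ x y : ℝ) = ∑ g : ι, x g * y g := by
        intro x y
        rw [PiLp.inner_apply]
        simp [RCLike.inner_apply, conj_trivial, mul_comm]
      -- z* not in W
      have hzsW : zs ∉ W := by
        rintro ⟨ν, hνM, hle⟩
        have : ν ∈ M ∩ ⋂ g ∈ u, T g := by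
          refine ⟨hνM, Set.mem_iInter₂.mpr fun g hg => ⟨hνM, ?_⟩⟩
          have h1 := hle ⟨g, hg⟩
          rw [hΦapp, hzsapp] at h1
          have h1' : c μ + δ ≤ ν g - μ g + c ν := h1
          rw [hcapp, hcapp] at h1'
          rw [hcapp, map_add ν f g]
          linarith
        rw [hempty] at this; exact this
      obtain ⟨ν₀, hν₀⟩ := hne
      have hWne : W.Nonempty := ⟨Φ ν₀, ν₀, hν₀, fun g => le_refl _⟩
      have hWconv : Convex ℝ W := by
        rintro z₁ ⟨ν₁, hν₁, hle₁⟩ z₂ ⟨ν₂, hν₂, hle₂⟩ a b ha hb hab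
        refine ⟨a • ν₁ + b • ν₂, hconv hν₁ hν₂ ha hb hab, fun g => ?_⟩
        have h1 : (a • z₁ + b • z₂) g = a * z₁ g + b * z₂ g := rfl
        have h2 : ((a • ν₁ + b • ν₂ : WeakDual ℝ C(Ω,ℝ))) g.1 = a * ν₁ g.1 + b * ν₂ g.1 := rfl
        have h3 : c (a • ν₁ + b • ν₂) = a * c ν₁ + b * c ν₂ := by
          have h4 : ((a • ν₁ + b • ν₂ : WeakDual ℝ C(Ω,ℝ))) f = a * ν₁ f + b * ν₂ f := rfl
          rw [hcapp, hcapp, hcapp, h4, haff ν₁ hν₁ ν₂ hν₂ a b ha hb hab]; ring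
        rw [h1, hΦapp, h2, h3]
        have g1 := hle₁ g; rw [hΦapp] at g1
        have g2 := hle₂ g; rw [hΦapp] at g2
        have hμg : a * μ g.1 + b * μ g.1 = μ g.1 := by rw [← add_mul, hab, one_mul]
        linarith [mul_le_mul_of_nonneg_left g1 ha, mul_le_mul_of_nonneg_left g2 hb, hμg]
      have hWclosed : IsClosed W := by
        apply IsSeqClosed.isClosed
        intro zn z hznW hzlim
        choose νn hνnM hνnle using hznW
        obtain ⟨x, hxM, hcl⟩ := helper1 νn hνnM
        refine ⟨x, hxM, fun g => ?_⟩
        have hcoord : Tendsto (fun n => zn n g) atTop (𝓝 (z g)) := by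
          have hcont : Continuous (fun w : EuclideanSpace ℝ ι => w g) :=
            (continuous_apply g).comp (PiLp.continuous_ofLp (p := 2) (β := fun _ : ι => ℝ))
          exact (hcont.tendsto z).comp hzlim
        have hkey := helper2 (fun ν => ν g.1 + (ν f + h ν) + (- μ g.1)) (huscF g.1 _) x hxM νn hνnM hcl (z g) ?_
        · rw [hΦapp, hcapp]; linarith [hkey]
        · intro ε hε
          have hev : ∀ᶠ n in atTop, z g - ε < zn n g :=
            hcoord.eventually (eventually_gt_nhds (by linarith))
          filter_upwards [hev] with n hn
          have h5 := hνnle n g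
          rw [hΦapp, hcapp] at h5
          linarith
      obtain ⟨p, hpW, hpmin⟩ := exists_norm_eq_iInf_of_complete_convex hWne
        (hWclosed.isComplete) hWconv zs
      have hproj : ∀ w ∈ W, inner ℝ (zs - p) (w - p) ≤ (0:ℝ) :=
        (norm_eq_iInf_iff_real_inner_le_zero hWconv hpW).mp hpmin
      have hlamne : zs - p ≠ 0 := sub_ne_zero_of_ne (fun hh => hzsW (hh ▸ hpW))
      set lam : EuclideanSpace ℝ ι := zs - p with hlam
      have hlamnn : ∀ g : ι, 0 ≤ lam g := by
        intro g
        have hwW : p - EuclideanSpace.single g (1:ℝ) ∈ W := by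
          obtain ⟨ν, hνM, hle⟩ := hpW
          refine ⟨ν, hνM, fun g' => ?_⟩
          have h1 : (p - EuclideanSpace.single g (1:ℝ)) g' = p g' - EuclideanSpace.single g (1:ℝ) g' := rfl
          have h6 := hle g'
          rw [h1, EuclideanSpace.single_apply]
          by_cases hgg : g' = g <;> simp [hgg] <;> linarith [hle g]
        have hp2 := hproj _ hwW
        have h2 : (p - EuclideanSpace.single g (1:ℝ)) - p = -(EuclideanSpace.single g (1:ℝ)) := by
          abel
        rw [h2, inner_neg_right] at hp2
        have h3 : inner ℝ lam (EuclideanSpace.single g (1:ℝ)) = lam g := by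
          rw [EuclideanSpace.inner_single_right]
          simp
        rw [h3] at hp2
        linarith
      set S : ℝ := ∑ g : ι, lam g * lam g with hS
      have hSnn : ∀ g : ι, (g ∈ (Finset.univ : Finset ι)) → 0 ≤ lam g * lam g :=
        fun g _ => mul_nonneg (hlamnn g) (hlamnn g)
      have hSpos : 0 < S := by
        rcases (Finset.sum_nonneg hSnn).eq_or_lt with heq | hpos
        · exfalso
          apply hlamne
          have hall := (Finset.sum_eq_zero_iff_of_nonneg hSnn).mp heq.symm
          have hnz : ‖lam‖ = 0 := by
            rw [EuclideanSpace.norm_eq]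
            have : ∀ g : ι, g ∈ (Finset.univ : Finset ι) → ‖lam g‖^2 = 0 := by
              intro g _
              have := hall g (Finset.mem_univ g)
              have hg0 : lam g = 0 := by nlinarith [this]
              rw [hg0]; simp
            rw [Finset.sum_congr rfl this]
            simp
          exact norm_eq_zero.mp hnz
        · exact hpos
      set L : ℝ := ∑ g : ι, lam g with hL
      have hLnn : 0 ≤ L := Finset.sum_nonneg (fun g _ => hlamnn g)
      have hLpos : 0 < L := by
        rcases hLnn.eq_or_lt with heq | hpos
        · exfalso
          have hall := (Finset.sum_eq_zero_iff_of_nonneg (fun g _ => hlamnn g)).mp heq.symm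
          have : S = 0 := Finset.sum_eq_zero (fun g hg => by rw [hall g hg]; ring)
          rw [this] at hSpos; exact lt_irrefl 0 hSpos
        · exact hpos
      -- the combined potential
      set gl : C(Ω,ℝ) := ∑ g : ι, lam g • (g.1 : C(Ω,ℝ)) with hgl
      have heval : ∀ ρ : WeakDual ℝ C(Ω,ℝ), ρ gl = ∑ g : ι, lam g * ρ g.1 := by
        intro ρ
        rw [hgl, map_sum]
        congr 1; funext g
        rw [map_smul]; simp
      set ghat : C(Ω,ℝ) := L⁻¹ • gl with hghat
      have hevalhat : ∀ ρ : WeakDual ℝ C(Ω,ℝ), ρ ghat = L⁻¹ * ρ gl := by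
        intro ρ; rw [hghat, map_smul]; simp
      set ε : ℝ := S / (2 * L) with hε
      have hεpos : 0 < ε := by positivity
      obtain ⟨ν, hνM, hνgt⟩ := hQlt ghat ε hεpos
      have hcν := hcon ghat
      -- ν ĝ + c ν > μ ĝ + c μ + δ - ε
      have hν2 : ν ghat + c ν > μ ghat + c μ + δ - ε := by
        have : ν (f + ghat) = ν f + ν ghat := map_add ν f ghat
        rw [hcapp, hcapp]
        linarith [hνgt, hcν, this ▸ hνgt]
      -- multiply by L
      have hν3 : ν gl - μ gl + L * c ν > L * (c μ + δ) - L * ε := by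
        have e1 : L * ν ghat = ν gl := by
          rw [hevalhat]; field_simp
        have e2 : L * μ ghat = μ gl := by
          rw [hevalhat]; field_simp
        have h9 := mul_lt_mul_of_pos_left hν2 hLpos
        linarith [h9, e1, e2]
      -- inner ℝ identities
      have hiΦ : (inner ℝ lam (Φ ν) : ℝ) = (ν gl - μ gl) + L * c ν := by
        rw [hinner, heval ν, heval μ]
        rw [Finset.sum_congr rfl (fun g _ => by rw [hΦapp] : ∀ g ∈ Finset.univ, lam g * Φ ν g = lam g * (ν g.1 - μ g.1 + c ν))]
        rw [hL, Finset.sum_mul]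
        rw [← Finset.sum_sub_distrib, ← Finset.sum_add_distrib]
        congr 1; funext g; ring
      have hizs : (inner ℝ lam zs : ℝ) = L * (c μ + δ) := by
        rw [hinner]
        rw [Finset.sum_congr rfl (fun g _ => by rw [hzsapp] : ∀ g ∈ Finset.univ, lam g * zs g = lam g * (c μ + δ))]
        rw [hL, Finset.sum_mul]
      have hilam : (inner ℝ lam lam : ℝ) = S := by rw [hinner, hS]
      -- Φ ν ∈ W
      have hΦνW : Φ ν ∈ W := ⟨ν, hνM, fun g => le_refl _⟩
      have hp3 := hproj _ hΦνW
      have hp4 : (inner ℝ lam (Φ ν) : ℝ) ≤ inner ℝ lam zs - S := by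
        have e1 : (inner ℝ lam (Φ ν - p) : ℝ) = inner ℝ lam (Φ ν) - inner ℝ lam p := inner_sub_right lam (Φ ν) p
        have e2 : (inner ℝ lam (zs - p) : ℝ) = inner ℝ lam zs - inner ℝ lam p := inner_sub_right lam zs p
        have e3 : (inner ℝ lam (zs - p) : ℝ) = S := by rw [← hlam, hilam]
        linarith [hp3, e1, e2, e3]
      rw [hiΦ, hizs] at hp4
      have : L * ε = S / 2 := by rw [hε]; field_simp
      linarith
    -- global intersection
    have hglobal : (M ∩ ⋂ g : C(Ω,ℝ), T g).Nonempty := by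
      by_contra hempty
      rw [Set.not_nonempty_iff_eq_empty] at hempty
      obtain ⟨u, hu⟩ := hcomp.elim_finite_subfamily_closed T hTclosed hempty
      exact Set.not_nonempty_iff_eq_empty.mpr hu (hfin u)
    obtain ⟨ν, hνM, hν⟩ := hglobal
    have hνall : ∀ g : C(Ω,ℝ), c μ + δ + μ g ≤ ν (f + g) + h ν := by
      intro g
      exact (Set.mem_iInter.mp hν g).2
    have hkey : ∀ g : C(Ω,ℝ), c μ + δ - c ν ≤ ν g - μ g := by
      intro g
      have h0 := hνall g
      rw [map_add ν f g] at h0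
      rw [hcapp μ] at h0
      rw [hcapp μ, hcapp ν]
      linarith
    have hzero : ∀ g : C(Ω,ℝ), ν g = μ g := by
      have hnn : ∀ g : C(Ω,ℝ), 0 ≤ ν g - μ g := by
        intro g
        by_contra hneg
        push_neg at hneg
        set x := ν g - μ g with hx
        set A := c μ + δ - c ν with hA
        obtain ⟨n, hn⟩ := exists_nat_gt (|A| / (-x))
        have hnx : A ≤ (n:ℝ) * x := by
          have := hkey ((n:ℝ) • g)
          have e1 : ν ((n:ℝ) • g) = (n:ℝ) * ν g := by rw [map_smul]; simp
          have e2 : μ ((n:ℝ) • g) = (n:ℝ) * μ g := by rw [map_smul]; simp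
          rw [e1, e2] at this
          rw [hA, hx]; linarith
        have hxneg : 0 < -x := by linarith
        have h6 : |A| < (n:ℝ) * (-x) := by
          rw [div_lt_iff₀ hxneg] at hn
          linarith
        have h7 : (n:ℝ) * x < -|A| := by nlinarith
        have h8 : -|A| ≤ A := neg_abs_le A
        linarith
      intro g
      have h1 := hnn g
      have h2 := hnn (-g)
      have e1 : ν (-g) = - ν g := map_neg ν g
      have e2 : μ (-g) = - μ g := map_neg μ g
      rw [e1, e2] at h2
      linarith
    have hνμ : ν = μ := DFunLike.ext ν μ hzero
    rw [hνμ] at hνall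
    have := hνall 0
    have e1 : μ (f + 0) = μ f := by rw [add_zero]
    rw [e1, hcapp] at this
    have e2 : μ 0 = 0 := map_zero μ
    rw [e2] at this
    linarith

  -- duality with the perturbation taken inside V
  have hkey1V : ∀ μ ∈ M, ∀ δ > (0:ℝ), ∃ g ∈ V, Q g - μ g < (μ f + h μ) + δ := by
    intro μ' hμ' δ hδ
    obtain ⟨g, hg⟩ := key1 μ' hμ' (δ/2) (by linarith)
    obtain ⟨g', hg'V, hg'd⟩ : ∃ g' ∈ V, ‖g - g'‖ < δ/4 := by
      obtain ⟨g'', hb, hv⟩ := Metric.dense_iff.mp hV g (δ/4) (by linarith)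
      exact ⟨g'', hv, by rw [← dist_eq_norm]; exact Metric.mem_ball'.mp hb⟩
    refine ⟨g', hg'V, ?_⟩
    have h1 : Q g' ≤ Q g + ‖g' - g‖ := hQlip g' g
    have h2 : |μ' (g - g')| ≤ ‖g - g'‖ := hnorm μ' hμ' _
    have h3 : μ' (g - g') = μ' g - μ' g' := map_sub μ' g g'
    have h4 : ‖g' - g‖ = ‖g - g'‖ := norm_sub_rev g' g
    have h5 := abs_le.mp h2
    linarith [hg]
  -- Danskin-type upper bound on directional derivatives of the pressure
  have hdanskin : ∀ g ∈ V, ∀ u ∈ V, ∀ ν : WeakDual ℝ C(Ω,ℝ), ν ∈ M → ν (f+g) + h ν = Q g →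
      ∀ η > (0:ℝ), ∀ t₀ > (0:ℝ), ∃ t : ℝ, 0 < t ∧ t ≤ t₀ ∧
        Q (g + t • u) ≤ Q g + t * (ν u + η) := by
    intro g hg u hu ν hνM hνeq η hη t₀ ht₀
    by_contra hcon
    push_neg at hcon
    -- hcon : ∀ t, 0 < t → t ≤ t₀ → Q g + t * (ν u + η) < Q (g + t • u)
    set t : ℕ → ℝ := fun n => t₀ / (n + 1) with ht
    have htpos : ∀ n, 0 < t n := fun n => div_pos ht₀ (by positivity)
    have htle : ∀ n, t n ≤ t₀ := by
      intro n
      rw [ht]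
      rw [div_le_iff₀ (by positivity : (0:ℝ) < (n:ℝ) + 1)]
      nlinarith [Nat.cast_nonneg (α := ℝ) n, ht₀.le]
    have htt : Tendsto t atTop (𝓝 0) := by
      have := tendsto_one_div_add_atTop_nhds_zero_nat (𝕜 := ℝ)
      have h2 : Tendsto (fun n : ℕ => t₀ * (1 / (n + 1))) atTop (𝓝 (t₀ * 0)) :=
        this.const_mul t₀
      simpa [ht, div_eq_mul_inv, mul_comm, one_div] using h2
    -- equilibrium states along the sequence
    have hmem : ∀ n, g + t n • u ∈ V := fun n => V.add_mem hg (V.smul_mem _ hu)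
    have hsel : ∀ n : ℕ, ∃ ρ : WeakDual ℝ C(Ω,ℝ), ρ ∈ M ∧ ρ (f + (g + t n • u)) + h ρ = Q (g + t n • u) :=
      fun n => (huniqQ _ (hmem n)).exists
    choose ρ hρM hρeq using hsel
    have happ : ∀ n, (ρ n) (f + (g + t n • u)) = ρ n (f + g) + t n * ρ n u := by
      intro n
      have : f + (g + t n • u) = (f + g) + t n • u := by ring
      rw [this, map_add, map_smul, smul_eq_mul]
    -- (α) directional value jump
    have halpha : ∀ n, ν u + η < ρ n u := by
      intro n
      have h1 := hcon (t n) (htpos n) (htle n)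
      have h2 : Q (g + t n • u) = ρ n (f + g) + t n * ρ n u + h (ρ n) := by
        rw [← hρeq n, happ n]
      have h3 : ρ n (f + g) + h (ρ n) ≤ Q g := hQle g (ρ n) (hρM n)
      have := htpos n
      nlinarith
    -- (β) near-maximality
    have hbeta : ∀ n, Q g - t n * (|ν u| + η + ‖u‖) ≤ ρ n (f + g) + h (ρ n) := by
      intro n
      have h1 := hcon (t n) (htpos n) (htle n)
      have h2 : Q (g + t n • u) = ρ n (f + g) + t n * ρ n u + h (ρ n) := by
        rw [← hρeq n, happ n]
      have h4 : |ρ n u| ≤ ‖u‖ := hnorm (ρ n) (hρM n) u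
      have h5 := abs_le.mp h4
      have h6 := abs_le.mp (le_refl |ν u|)
      have := htpos n
      nlinarith [abs_nonneg (ν u), le_abs_self (ν u), neg_abs_le (ν u)]
    obtain ⟨x, hxM, hcl⟩ := helper1 ρ hρM
    -- x is an equilibrium state of f + g
    have hxge : Q g ≤ x (f + g) + h x := by
      apply helper2 _ (husc2 g) x hxM ρ hρM hcl
      intro ε hε
      have : ∀ᶠ n in atTop, t n * (|ν u| + η + ‖u‖) < ε := by
        have hcont : Tendsto (fun n => t n * (|ν u| + η + ‖u‖)) atTop (𝓝 (0 * (|ν u| + η + ‖u‖))) :=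
          htt.mul_const _
        rw [zero_mul] at hcont
        exact hcont.eventually (eventually_lt_nhds hε)
      filter_upwards [this] with n hn
      linarith [hbeta n]
    have hxeq : x (f + g) + h x = Q g := le_antisymm (hQle g x hxM) hxge
    obtain ⟨w, hw, hwuniq⟩ := huniqQ g hg
    have hxw : x = w := hwuniq x ⟨hxM, hxeq⟩
    have hνw : ν = w := hwuniq ν ⟨hνM, hνeq⟩
    -- continuity bound
    have hxu : ν u + η ≤ x u := by
      apply helper3 (fun ρ' => ρ' u) (WeakDual.eval_continuous u) x ρ hcl
      intro n; exact (halpha n).le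
    rw [hxw, ← hνw] at hxu
    linarith

  -- main approximation step: finite-dimensional penalized minimization
  have key3 : ∀ μ ∈ M, ∀ (K : ℕ) (φ : Fin K → C(Ω,ℝ)), (∀ i, φ i ∈ V) → ∀ ε > (0:ℝ),
      ∃ g ∈ V, ∃ ν : WeakDual ℝ C(Ω,ℝ), ν ∈ M ∧ (ν (f+g) + h ν = Q g) ∧
        (∀ i, |ν (φ i) - μ (φ i)| ≤ ε) ∧ (μ f + h μ) - ε ≤ ν f + h ν := by
    classical
    intro μ hμ K φ hφV ε hε
    set δ : ℝ := ε^2/2 with hδ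
    have hδpos : 0 < δ := by positivity
    obtain ⟨g₀, hg₀V, hg₀⟩ := hkey1V μ hμ δ hδpos
    set ψ : Fin (K+1) → C(Ω,ℝ) := Fin.snoc φ g₀ with hψ
    have hψV : ∀ i, ψ i ∈ V := by
      intro i
      refine Fin.lastCases ?_ ?_ i
      · rw [hψ]; rw [Fin.snoc_last]; exact hg₀V
      · intro j; rw [hψ]; rw [Fin.snoc_castSucc]; exact hφV j
    set e : EuclideanSpace ℝ (Fin (K+1)) →ₗ[ℝ] C(Ω,ℝ) :=
      { toFun := fun s => ∑ i, s i • ψ i,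
        map_add' := by
          intro s t
          rw [← Finset.sum_add_distrib]
          refine Finset.sum_congr rfl (fun i _ => ?_)
          have hcoord : (s + t : EuclideanSpace ℝ (Fin (K+1))) i = s i + t i := rfl
          rw [hcoord, add_smul]
        map_smul' := by
          intro a s
          simp only [RingHom.id_apply]
          rw [Finset.smul_sum]
          refine Finset.sum_congr rfl (fun i _ => ?_)
          have hcoord : (a • s : EuclideanSpace ℝ (Fin (K+1))) i = a * s i := rfl
          rw [hcoord, smul_smul] } with he
    have heapp : ∀ s : EuclideanSpace ℝ (Fin (K+1)), e s = ∑ i, s i • ψ i := fun _ => rfl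
    have heV : ∀ s, e s ∈ V := by
      intro s
      rw [heapp]
      exact Submodule.sum_mem V (fun i _ => V.smul_mem _ (hψV i))
    have hecont : Continuous e := e.continuous_of_finiteDimensional
    have hevalsum : ∀ (ρ : WeakDual ℝ C(Ω,ℝ)) (s : EuclideanSpace ℝ (Fin (K+1))),
        ρ (e s) = ∑ i, s i * ρ (ψ i) := by
      intro ρ s
      rw [heapp, map_sum]
      exact Finset.sum_congr rfl (fun i _ => by rw [map_smul]; rfl)
    have hinner : ∀ x y : EuclideanSpace ℝ (Fin (K+1)), (inner ℝ x y : ℝ) = ∑ i, x i * y i := by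
      intro x y
      rw [PiLp.inner_apply]
      simp [RCLike.inner_apply, conj_trivial, mul_comm]
    set v : EuclideanSpace ℝ (Fin (K+1)) :=
      (WithLp.equiv 2 (Fin (K+1) → ℝ)).symm (fun i => μ (ψ i)) with hv
    have hvapp : ∀ i, v i = μ (ψ i) := fun _ => rfl
    have hμe : ∀ s, μ (e s) = (inner ℝ v s : ℝ) := by
      intro s
      rw [hevalsum, hinner]
      exact Finset.sum_congr rfl (fun i _ => by rw [hvapp]; ring)
    set q : EuclideanSpace ℝ (Fin (K+1)) → ℝ := fun s => Q (g₀ + e s) with hq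
    have hq0 : q 0 = Q g₀ := by rw [hq]; simp only [map_zero, add_zero]
    have hminor : ∀ s, q 0 - δ + (inner ℝ v s : ℝ) ≤ q s := by
      intro s
      have h1 := hQle (g₀ + e s) μ hμ
      have h2 : μ (f + (g₀ + e s)) = μ f + μ g₀ + μ (e s) := by
        rw [map_add, map_add]; ring
      rw [h2, hμe] at h1
      rw [hq0]
      linarith
    have hQcont : Continuous Q := by
      refine LipschitzWith.continuous (K := 1) ?_
      refine LipschitzWith.of_dist_le_mul (fun x y => ?_)
      rw [Real.dist_eq, dist_eq_norm, NNReal.coe_one, one_mul, abs_le]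
      constructor
      · have := hQlip y x; rw [norm_sub_rev] at this; linarith
      · have := hQlip x y; linarith
    set γ : EuclideanSpace ℝ (Fin (K+1)) → ℝ := fun s => q s - inner ℝ v s + ‖s‖^2/2 with hγ
    have hγcont : Continuous γ := by
      apply Continuous.add
      · apply Continuous.sub
        · exact hQcont.comp (continuous_const.add hecont)
        · exact Continuous.inner continuous_const continuous_id
      · exact (continuous_norm.pow 2).div_const 2
    set R : ℝ := Real.sqrt (2*δ) + 1 with hR
    have hRpos : 0 < R := by positivity
    obtain ⟨s₀, hs₀ball, hs₀min⟩ := (isCompact_closedBall (0:EuclideanSpace ℝ (Fin (K+1))) R).exists_isMinOn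
      ⟨0, Metric.mem_closedBall_self hRpos.le⟩ hγcont.continuousOn
    have hγ0 : γ 0 = q 0 := by
      rw [hγ]; simp only [inner_zero_right, norm_zero]
      norm_num
    have hs₀le : γ s₀ ≤ q 0 := hγ0 ▸ hs₀min (Metric.mem_closedBall_self hRpos.le)
    have hs₀norm : ‖s₀‖ ≤ Real.sqrt (2*δ) := by
      by_contra hgt
      push_neg at hgt
      have h2 : 2*δ < ‖s₀‖^2 := by
        have h3 : 0 ≤ ‖s₀‖ := norm_nonneg _
        have := (Real.sqrt_lt' (by linarith [Real.sqrt_nonneg (2*δ)] : 0 < ‖s₀‖)).mp hgt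
        linarith
      have h1 := hminor s₀
      have h6 : γ s₀ = q s₀ - inner ℝ v s₀ + ‖s₀‖^2/2 := rfl
      rw [h6] at hs₀le
      linarith [h1, hs₀le, h2]
    set gstar : C(Ω,ℝ) := g₀ + e s₀ with hgstar
    have hgstarV : gstar ∈ V := V.add_mem hg₀V (heV s₀)
    obtain ⟨ν, ⟨hνM, hνeq⟩, -⟩ := huniqQ gstar hgstarV
    set G : EuclideanSpace ℝ (Fin (K+1)) :=
      (WithLp.equiv 2 (Fin (K+1) → ℝ)).symm (fun i => ν (ψ i)) with hG
    have hGapp : ∀ i, G i = ν (ψ i) := fun _ => rfl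
    have hνe : ∀ u, ν (e u) = (inner ℝ G u : ℝ) := by
      intro u
      rw [hevalsum, hinner]
      exact Finset.sum_congr rfl (fun i _ => by rw [hGapp]; ring)
    -- first order condition
    have hfoc : ∀ u : EuclideanSpace ℝ (Fin (K+1)), 0 ≤ (inner ℝ (G - v + s₀) u : ℝ) := by
      intro u
      by_contra hneg
      push_neg at hneg
      set x : ℝ := inner ℝ (G - v + s₀) u with hx
      have hden : (0:ℝ) < 1 + ‖u‖^2/2 := by positivity
      set η : ℝ := (-x) / (2 * (1 + ‖u‖^2/2)) with hη
      have hηpos : 0 < η := div_pos (neg_pos.mpr hneg) (by positivity)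
      set t₀ : ℝ := min η (1/(‖u‖+1)) with ht₀
      have ht₀pos : 0 < t₀ := lt_min hηpos (by positivity)
      obtain ⟨t, htpos, htle, hdan⟩ :=
        hdanskin gstar hgstarV (e u) (heV u) ν hνM hνeq η hηpos t₀ ht₀pos
      have htη : t ≤ η := le_trans htle (min_le_left _ _)
      have htu : t * ‖u‖ ≤ 1 := by
        rcases le_or_gt ‖u‖ 0 with hu0 | hu0
        · have : ‖u‖ = 0 := le_antisymm hu0 (norm_nonneg _)
          rw [this, mul_zero]; norm_num
        · have ht1 : t ≤ 1/(‖u‖+1) := le_trans htle (min_le_right _ _)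
          have : t * ‖u‖ ≤ (1/(‖u‖+1)) * ‖u‖ := mul_le_mul_of_nonneg_right ht1 hu0.le
          have h4 : (1/(‖u‖+1)) * ‖u‖ ≤ 1 := by
            rw [div_mul_eq_mul_div, div_le_one (by positivity)]
            linarith
          linarith
      have hs' : s₀ + t • u ∈ Metric.closedBall (0:EuclideanSpace ℝ (Fin (K+1))) R := by
        rw [Metric.mem_closedBall, dist_zero_right]
        calc ‖s₀ + t • u‖ ≤ ‖s₀‖ + ‖t • u‖ := norm_add_le _ _
          _ = ‖s₀‖ + |t| * ‖u‖ := by rw [norm_smul, Real.norm_eq_abs]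
          _ = ‖s₀‖ + t * ‖u‖ := by rw [abs_of_pos htpos]
          _ ≤ Real.sqrt (2*δ) + 1 := add_le_add hs₀norm htu
      have hmin2 : γ s₀ ≤ γ (s₀ + t • u) := hs₀min hs'
      have hqs' : q (s₀ + t • u) ≤ q s₀ + t * ((inner ℝ G u : ℝ) + η) := by
        have hplus : g₀ + e (s₀ + t • u) = gstar + t • (e u) := by
          rw [map_add, map_smul, hgstar]
          abel
        have hgq : Q gstar = q s₀ := rfl
        have hthis : q (s₀ + t • u) = Q (gstar + t • e u) := by
          rw [← hplus]
        rw [hthis, ← hνe u, ← hgq]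
        exact hdan
      have hinner1 : (inner ℝ v (s₀ + t • u) : ℝ) = inner ℝ v s₀ + t * inner ℝ v u := by
        rw [inner_add_right, real_inner_smul_right]
      have hinner2 : (inner ℝ s₀ (t • u) : ℝ) = t * inner ℝ s₀ u := real_inner_smul_right _ _ _
      have hnorm1 : ‖s₀ + t • u‖^2 = ‖s₀‖^2 + 2*(t * (inner ℝ s₀ u : ℝ)) + t^2*‖u‖^2 := by
        rw [norm_add_sq_real, hinner2, norm_smul, Real.norm_eq_abs, mul_pow, sq_abs]
      have hxeq : x = (inner ℝ G u : ℝ) - inner ℝ v u + inner ℝ s₀ u := by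
        rw [hx, inner_add_left, inner_sub_left]
      have hγs₀ : γ s₀ = q s₀ - inner ℝ v s₀ + ‖s₀‖^2/2 := rfl
      have hγs' : γ (s₀ + t • u) = q (s₀ + t • u) - inner ℝ v (s₀ + t • u) + ‖s₀ + t • u‖^2/2 := rfl
      have A1 : 0 ≤ q (s₀ + t • u) - inner ℝ v (s₀ + t • u) + ‖s₀ + t • u‖^2/2 - (q s₀ - inner ℝ v s₀ + ‖s₀‖^2/2) := by
        rw [hγs₀, hγs'] at hmin2
        linarith only [hmin2]
      have A2 : 0 ≤ t * (inner ℝ G u + η) - t * inner ℝ v u + t * inner ℝ s₀ u + t^2*‖u‖^2/2 := by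
        linarith only [A1, hqs', hinner1, hnorm1]
      have hlin : 0 ≤ t * (x + η) + t^2*‖u‖^2/2 := by
        rw [hxeq]
        linarith only [A2]
      have h5 : 0 ≤ t * (x + η + t*‖u‖^2/2) := by linarith only [hlin]
      have hdiv : 0 ≤ x + η + t*‖u‖^2/2 := (mul_nonneg_iff_of_pos_left htpos).mp h5
      have h7 : t*(‖u‖^2/2) ≤ η*(‖u‖^2/2) :=
        mul_le_mul_of_nonneg_right htη (by positivity)
      have hfinal : 0 ≤ x + η * (1 + ‖u‖^2/2) := by linarith only [hdiv, h7]
      have h8 : η * (1 + ‖u‖^2/2) = -x/2 := by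
        rw [hη]
        field_simp
      linarith only [hfinal, h8, hneg]
    have hGv : G - v + s₀ = 0 := by
      have h1 := hfoc (-(G - v + s₀))
      rw [inner_neg_right] at h1
      have h2 : (inner ℝ (G-v+s₀) (G-v+s₀) : ℝ) ≤ 0 := by linarith
      exact real_inner_self_nonpos.mp h2
    have hcoord : ∀ i, ν (ψ i) - μ (ψ i) = - s₀ i := by
      intro i
      have : (G - v + s₀) i = G i - v i + s₀ i := rfl
      have h0 : (G - v + s₀) i = 0 := by rw [hGv]; rfl
      rw [this] at h0
      rw [hGapp, hvapp] at h0
      linarith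
    have hsabs : ∀ i, |s₀ i| ≤ ε := by
      intro i
      have h1 : |s₀ i| ≤ ‖s₀‖ := by
        rw [EuclideanSpace.norm_eq]
        have h2 : |s₀ i|^2 ≤ ∑ j, ‖s₀ j‖^2 := by
          have := Finset.single_le_sum (f := fun j => ‖s₀ j‖^2)
            (fun j _ => sq_nonneg _) (Finset.mem_univ i)
          simpa [Real.norm_eq_abs] using this
        calc |s₀ i| = Real.sqrt (|s₀ i|^2) := by rw [Real.sqrt_sq (abs_nonneg _)]
          _ ≤ Real.sqrt (∑ j, ‖s₀ j‖^2) := Real.sqrt_le_sqrt h2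
      have h3 : Real.sqrt (2*δ) = ε := by
        rw [hδ]
        have : 2*(ε^2/2) = ε^2 := by ring
        rw [this, Real.sqrt_sq hε.le]
      linarith [hs₀norm]
    refine ⟨gstar, hgstarV, ν, hνM, hνeq, ?_, ?_⟩
    · intro i
      have := hcoord (Fin.castSucc i)
      have hψi : ψ (Fin.castSucc i) = φ i := by rw [hψ, Fin.snoc_castSucc]
      rw [hψi] at this
      rw [this, abs_neg]
      exact hsabs _
    · -- entropy bound
      have hνc : ν f + h ν = Q gstar - ν gstar := by
        have : ν (f + gstar) = ν f + ν gstar := map_add ν f gstar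
        rw [this] at hνeq
        linarith
      have hμc : μ f + h μ + μ gstar ≤ Q gstar := by
        have h1 := hQle gstar μ hμ
        have : μ (f + gstar) = μ f + μ gstar := map_add μ f gstar
        rw [this] at h1
        linarith
      have hg₀diff : μ g₀ - ν g₀ = s₀ (Fin.last K) := by
        have := hcoord (Fin.last K)
        have hψl : ψ (Fin.last K) = g₀ := by rw [hψ, Fin.snoc_last]
        rw [hψl] at this
        linarith
      have hediff : μ (e s₀) - ν (e s₀) = ∑ i, s₀ i * s₀ i := by
        rw [hevalsum, hevalsum, ← Finset.sum_sub_distrib]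
        refine Finset.sum_congr rfl (fun i _ => ?_)
        have := hcoord i
        have h7 : μ (ψ i) - ν (ψ i) = s₀ i := by linarith
        rw [← mul_sub, h7]
      have hsq : 0 ≤ ∑ i, s₀ i * s₀ i := Finset.sum_nonneg (fun i _ => mul_self_nonneg _)
      have hgdiff : μ gstar - ν gstar = (μ g₀ - ν g₀) + (μ (e s₀) - ν (e s₀)) := by
        rw [hgstar, map_add, map_add]
        ring
      have hlast : - ε ≤ s₀ (Fin.last K) := by
        have := hsabs (Fin.last K)
        linarith [abs_le.mp this]
      linarith [hνc, hμc, hg₀diff, hediff, hsq, hgdiff, hlast]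

  classical
  intro μ hμ
  haveI : Nonempty C(Ω,ℝ) := ⟨0⟩
  set ψ : ℕ → C(Ω,ℝ) := TopologicalSpace.denseSeq C(Ω,ℝ) with hψdef
  have hψ : DenseRange ψ := TopologicalSpace.denseRange_denseSeq C(Ω,ℝ)
  have happrox : ∀ j n : ℕ, ∃ g' , g' ∈ V ∧ ‖ψ j - g'‖ < 1/((n:ℝ)+1) := by
    intro j n
    obtain ⟨g', hg'ball, hg'V⟩ := Metric.dense_iff.mp hV (ψ j) (1/((n:ℝ)+1)) (by positivity)
    exact ⟨g', hg'V, by rw [← dist_eq_norm]; exact Metric.mem_ball'.mp hg'ball⟩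
  choose app happV happd using happrox
  have hstage : ∀ n : ℕ, ∃ g ∈ V, ∃ ν : WeakDual ℝ C(Ω,ℝ), ν ∈ M ∧ (ν (f+g) + h ν = Q g) ∧
      (∀ i : Fin (n+1), |ν (app i n) - μ (app i n)| ≤ 1/((n:ℝ)+1)) ∧
      (μ f + h μ) - 1/((n:ℝ)+1) ≤ ν f + h ν := by
    intro n
    exact key3 μ hμ (n+1) (fun i => app i n) (fun i => happV i n) (1/((n:ℝ)+1)) (by positivity)
  choose gn hgnV νn hνnM hνneq hνnweak hνnent using hstage
  -- evaluation convergence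
  have hev : ∀ g : C(Ω,ℝ), Tendsto (fun n => νn n g) atTop (𝓝 (μ g)) := by
    intro g
    rw [Metric.tendsto_atTop]
    intro ε hε
    obtain ⟨j, hj⟩ := Metric.denseRange_iff.mp hψ g (ε/8) (by linarith)
    obtain ⟨N₁, hN₁⟩ := exists_nat_one_div_lt (show (0:ℝ) < ε/8 by linarith)
    refine ⟨max j N₁, fun n hn => ?_⟩
    have hnj : j ≤ n := le_trans (le_max_left _ _) hn
    have hnN₁ : N₁ ≤ n := le_trans (le_max_right _ _) hn
    have hfrac : 1/((n:ℝ)+1) ≤ 1/((N₁:ℝ)+1) := by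
      apply div_le_div_of_nonneg_left (by norm_num) (by positivity)
      have : (N₁:ℝ) ≤ (n:ℝ) := Nat.cast_le.mpr hnN₁
      linarith
    have hfrac2 : 1/((n:ℝ)+1) < ε/8 := lt_of_le_of_lt hfrac hN₁
    set a : C(Ω,ℝ) := app j n with ha
    have hga : ‖g - a‖ < ε/4 := by
      have h1 : ‖g - a‖ ≤ ‖g - ψ j‖ + ‖ψ j - a‖ := by
        have := norm_add_le (g - ψ j) (ψ j - a)
        rwa [sub_add_sub_cancel] at this
      have h2 : ‖g - ψ j‖ < ε/8 := by rw [← dist_eq_norm]; exact hj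
      have h3 : ‖ψ j - a‖ < ε/8 := lt_trans (happd j n) hfrac2
      linarith
    have hb : |νn n a - μ a| ≤ 1/((n:ℝ)+1) := hνnweak n ⟨j, by omega⟩
    have h2 : |νn n g - νn n a| ≤ ‖g - a‖ := by
      have := hnorm (νn n) (hνnM n) (g - a)
      rwa [map_sub] at this
    have h3 : |μ a - μ g| ≤ ‖g - a‖ := by
      have := hnorm μ hμ (g - a)
      rw [map_sub] at this
      rw [abs_sub_comm]
      exact this
    rw [Real.dist_eq]
    have t1 := abs_sub_le (νn n g) (νn n a) (μ g)
    have t2 := abs_sub_le (νn n a) (μ a) (μ g)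
    linarith [hb, hfrac2]
  -- weak* convergence
  have htend : Tendsto νn atTop (𝓝 μ) := by
    rw [tendsto_iff_forall_eval_tendsto_topDualPairing]
    exact hev
  -- entropy convergence
  have hent : Tendsto (fun n => h (νn n)) atTop (𝓝 (h μ)) := by
    rw [tendsto_order]
    constructor
    · intro a ha
      have h1 : Tendsto (fun n : ℕ => (μ f + h μ) - 1/((n:ℝ)+1) - νn n f) atTop
          (𝓝 ((μ f + h μ) - 0 - μ f)) :=
        (tendsto_const_nhds.sub tendsto_one_div_add_atTop_nhds_zero_nat).sub (hev f)
      have h2 : (μ f + h μ) - 0 - μ f = h μ := by ring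
      rw [h2] at h1
      filter_upwards [h1.eventually (eventually_gt_nhds ha)] with n hn
      have h3 := hνnent n
      linarith
    · intro b hb
      have hevent := husc μ hμ b hb
      obtain ⟨U, hUopen, hμU, hUsub⟩ := mem_nhdsWithin.mp hevent
      have hUev : ∀ᶠ n in atTop, νn n ∈ U := htend.eventually (hUopen.mem_nhds hμU)
      filter_upwards [hUev] with n hn
      exact hUsub ⟨hn, hνnM n⟩
  exact ⟨νn, gn, hgnV, hνnM, htend, hent, hνneq⟩
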